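/- arXiv:2305.01377 — 4 statements merged into one kernel-verified Lean document; each statement's English description precedes it below -/
import Mathlib

section
/- Let C: ℝ≥0 → ℝ be given by C(x) = σ²·exp(−x/(2s²)) with σ, s > 0, and fix ξ ≤ 0. Then the function η ↦ (C(η²)/C(0))·ξ − η·(C'(η²)/C'(0)) = exp(−η²/(2s²))·(ξ − η) attains its global minimum over η ∈ ℝ at η̂ = ξ/2 + √((ξ/2)² + s²). -/
/-- For the squared exponential covariance `C(x) = σ²·exp(−x/(2s²))` and
`ξ ≤ 0`, the RFD objective `η ↦ C(η²)/C(0)·ξ − η·C'(η²)/C'(0)` equals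
`exp(−η²/(2s²))·(ξ − η)` and attains its global minimum at
`η̂ = ξ/2 + √((ξ/2)² + s²)`. -/
theorem sqExp_optimal_step_size (σ s ξ : ℝ) (hσ : 0 < σ) (hs : 0 < s)
    (hξ : ξ ≤ 0) :
    (∀ η : ℝ,
      ((fun x => σ ^ 2 * Real.exp (-x / (2 * s ^ 2))) (η ^ 2)
            / (fun x => σ ^ 2 * Real.exp (-x / (2 * s ^ 2))) 0) * ξ
          - η * (deriv (fun x => σ ^ 2 * Real.exp (-x / (2 * s ^ 2))) (η ^ 2)
            / deriv (fun x => σ ^ 2 * Real.exp (-x / (2 * s ^ 2))) 0)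
        = Real.exp (-η ^ 2 / (2 * s ^ 2)) * (ξ - η)) ∧
    (∀ η : ℝ,
      Real.exp (-(ξ / 2 + Real.sqrt ((ξ / 2) ^ 2 + s ^ 2)) ^ 2 / (2 * s ^ 2))
          * (ξ - (ξ / 2 + Real.sqrt ((ξ / 2) ^ 2 + s ^ 2)))
        ≤ Real.exp (-η ^ 2 / (2 * s ^ 2)) * (ξ - η)) := by
  have hs2 : (0:ℝ) < 2 * s ^ 2 := by positivity
  have hderiv : ∀ p : ℝ, deriv (fun x => σ ^ 2 * Real.exp (-x / (2 * s ^ 2))) p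
      = σ ^ 2 * Real.exp (-p / (2 * s ^ 2)) * (-(1 / (2 * s ^ 2))) := by
    intro p
    have h1 : HasDerivAt (fun x : ℝ => -x / (2 * s ^ 2)) (-(1 / (2 * s ^ 2))) p := by
      have := ((hasDerivAt_id p).neg).div_const (2 * s ^ 2)
      simpa [neg_div] using this
    have h : HasDerivAt (fun x : ℝ => σ ^ 2 * Real.exp (-x / (2 * s ^ 2)))
        (σ ^ 2 * (Real.exp (-p / (2 * s ^ 2)) * (-(1 / (2 * s ^ 2))))) p :=
      (h1.exp).const_mul (σ ^ 2)
    rw [h.deriv]; ring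
  constructor
  · intro η
    rw [hderiv, hderiv]
    simp only [neg_zero, zero_div, Real.exp_zero]
    have hσ2 : (σ:ℝ) ^ 2 ≠ 0 := by positivity
    have hne : -(1 / (2 * s ^ 2)) ≠ 0 := by
      have : (1 / (2 * s ^ 2)) > 0 := by positivity
      linarith
    field_simp
  · intro η
    set r := Real.sqrt ((ξ / 2) ^ 2 + s ^ 2) with hr
    set a := ξ / 2 + r with ha
    have hrnn : 0 ≤ r := Real.sqrt_nonneg _
    have hrsq : r ^ 2 = (ξ / 2) ^ 2 + s ^ 2 := Real.sq_sqrt (by positivity)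
    have hξa : ξ - a ≤ 0 := by
      have : ξ / 2 ≤ 0 := by linarith
      simp only [ha]; linarith
    have hsa : s ^ 2 = a ^ 2 - a * ξ := by
      simp only [ha]; nlinarith [hrsq]
    -- key algebraic inequality
    have hpoly : (η ^ 2 - a ^ 2 + 2 * s ^ 2) * (ξ - a) ≤ (ξ - η) * (2 * s ^ 2) := by
      rw [hsa]
      nlinarith [mul_nonneg (by linarith : (0:ℝ) ≤ a - ξ) (sq_nonneg (η - a))]
    set t := (η ^ 2 - a ^ 2) / (2 * s ^ 2) with ht
    have hexp : t + 1 ≤ Real.exp t := Real.add_one_le_exp t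
    have key : Real.exp t * (ξ - a) ≤ ξ - η := by
      have h1 : Real.exp t * (ξ - a) ≤ (t + 1) * (ξ - a) :=
        mul_le_mul_of_nonpos_right hexp hξa
      have h2 : (t + 1) * (ξ - a) ≤ ξ - η := by
        rw [ht]
        rw [div_add' _ _ _ (ne_of_gt hs2)]
        rw [div_mul_eq_mul_div, div_le_iff₀ hs2]
        nlinarith [hpoly]
      linarith
    have hsplit : Real.exp (-a ^ 2 / (2 * s ^ 2))
        = Real.exp (-η ^ 2 / (2 * s ^ 2)) * Real.exp t := by
      rw [← Real.exp_add]
      congr 1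
      rw [ht]; ring
    calc Real.exp (-a ^ 2 / (2 * s ^ 2)) * (ξ - a)
        = Real.exp (-η ^ 2 / (2 * s ^ 2)) * (Real.exp t * (ξ - a)) := by
          rw [hsplit]; ring
      _ ≤ Real.exp (-η ^ 2 / (2 * s ^ 2)) * (ξ - η) :=
          mul_le_mul_of_nonneg_left key (Real.exp_nonneg _)
end

section
/- Fix s > 0, ξ ≤ 0 and set a := 1 − (√3/s)·ξ ≥ 1. The function G(η) := exp(−√3 η/s)·[(1 + √3 η/s)·ξ − η] over η ≥ 0 attains its minimum at η̂ = (s/√3)·(1/a) = (s/√3)/(1 − (√3/s)ξ). -/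
/-- Key scalar inequality: `exp(-t)·(1+(t-1/a)) ≤ exp(-1/a)`. -/
lemma matern_aux (a t : ℝ) : Real.exp (-t) * (1 + (t - 1/a)) ≤ Real.exp (-(1/a)) := by
  rcases le_or_gt (1 + (t - 1/a)) 0 with h | h
  · exact le_trans (mul_nonpos_of_nonneg_of_nonpos (Real.exp_pos _).le h) (Real.exp_pos _).le
  · calc Real.exp (-t) * (1 + (t - 1/a))
        ≤ Real.exp (-t) * Real.exp (t - 1/a) := by
          have := Real.add_one_le_exp (t - 1/a)
          nlinarith [Real.exp_pos (-t)]
      _ = Real.exp (-(1/a)) := by rw [← Real.exp_add]; ring_nf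

/-- For the Matérn covariance with ν = 3/2 and normalized centered loss
`ξ ≤ 0`, the RFD step-size objective
`G(η) = exp(−√3·η/s)·((1 + √3·η/s)·ξ − η)` attains its minimum over `η ≥ 0`
at `η̂ = (s/√3)/(1 − (√3/s)·ξ)`. -/
theorem matern_three_halves_rfd_step (s ξ : ℝ) (hs : 0 < s) (hξ : ξ ≤ 0) :
    ∀ η : ℝ, 0 ≤ η →
      Real.exp (-(Real.sqrt 3) * ((s / Real.sqrt 3) / (1 - Real.sqrt 3 / s * ξ)) / s)
          * ((1 + Real.sqrt 3 * ((s / Real.sqrt 3) / (1 - Real.sqrt 3 / s * ξ)) / s) * ξ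
            - (s / Real.sqrt 3) / (1 - Real.sqrt 3 / s * ξ))
        ≤ Real.exp (-(Real.sqrt 3) * η / s)
            * ((1 + Real.sqrt 3 * η / s) * ξ - η) := by
  intro η hη
  have hr : 0 < Real.sqrt 3 := Real.sqrt_pos.mpr (by norm_num)
  set r := Real.sqrt 3 with hrdef
  have hr' : r ≠ 0 := hr.ne'
  have hs' : s ≠ 0 := hs.ne'
  have ha : 0 < 1 - r / s * ξ := by
    have : r / s * ξ ≤ 0 := mul_nonpos_of_nonneg_of_nonpos (div_pos hr hs).le hξ
    linarith
  set a := 1 - r / s * ξ with hadef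
  have ha' : a ≠ 0 := ha.ne'
  set t := r * η / s with htdef
  have hq : 0 < s / r * a := by positivity
  have key : Real.exp (-t) * (1 + (t - 1/a)) * (s / r * a)
      ≤ Real.exp (-(1/a)) * (s / r * a) :=
    mul_le_mul_of_nonneg_right (matern_aux a t) hq.le
  have harg : -r * (s / r / a) / s = -(1/a) := by field_simp
  have hargR : -r * η / s = -t := by rw [htdef]; ring
  have hane : (1:ℝ) - r / s * ξ ≠ 0 := ha'
  have h2 : s - r * ξ ≠ 0 := by nlinarith [mul_nonpos_of_nonneg_of_nonpos hr.le hξ]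
  have eL : (1 + r * (s / r / a) / s) * ξ - s / r / a = -(s / r * a) := by
    rw [hadef]; field_simp [h2]; ring
  have eR : (1 + r * η / s) * ξ - η = -((1 + (t - 1/a)) * (s / r * a)) := by
    rw [htdef, hadef]; field_simp [h2]; ring
  rw [harg, hargR, eL, eR]
  nlinarith [key]
end

section
/- Fix β > 0, s > 0, ξ ≤ 0. The polynomial p(η̃) := 1 + (√β ξ/s)·η̃ − (1+β)·η̃² + (√β ξ/s)·η̃³ has a unique positive root η̃*, which lies in the interval [0, 1/√(1+β)], and p is strictly decreasing on [0, ∞). -/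
/-- For the rational quadratic covariance model with `β > 0`, `s > 0` and
`ξ ≤ 0`, the first-order-condition polynomial
`p(t) = 1 + (√β·ξ/s)·t − (1+β)·t² + (√β·ξ/s)·t³` is strictly decreasing on
`[0, ∞)`, has a unique nonnegative root, and this root lies in
`[0, 1/√(1+β)]`. -/
theorem rational_quadratic_unique_root (β s ξ : ℝ) (hβ : 0 < β) (hs : 0 < s)
    (hξ : ξ ≤ 0) :
    StrictAntiOn
        (fun t : ℝ => 1 + Real.sqrt β * ξ / s * t - (1 + β) * t ^ 2
          + Real.sqrt β * ξ / s * t ^ 3) (Set.Ici 0) ∧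
    (∃! t : ℝ, 0 ≤ t ∧
      1 + Real.sqrt β * ξ / s * t - (1 + β) * t ^ 2
        + Real.sqrt β * ξ / s * t ^ 3 = 0) ∧
    (∀ t : ℝ, 0 ≤ t →
      1 + Real.sqrt β * ξ / s * t - (1 + β) * t ^ 2
          + Real.sqrt β * ξ / s * t ^ 3 = 0 →
      t ≤ 1 / Real.sqrt (1 + β)) := by
  set c : ℝ := Real.sqrt β * ξ / s with hc
  have hc0 : c ≤ 0 := by
    apply div_nonpos_of_nonpos_of_nonneg _ hs.le
    exact mul_nonpos_of_nonneg_of_nonpos (Real.sqrt_nonneg β) hξ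
  set p : ℝ → ℝ := fun t => 1 + c * t - (1 + β) * t ^ 2 + c * t ^ 3 with hp
  have hβ1 : (0:ℝ) < 1 + β := by linarith
  -- strict anti
  have hanti : StrictAntiOn p (Set.Ici 0) := by
    intro a ha b hb hab
    simp only [Set.mem_Ici] at ha hb
    have h2 : a ^ 2 < b ^ 2 := by nlinarith
    have h3 : a ^ 3 ≤ b ^ 3 := by nlinarith
    have hca : c * b ≤ c * a := by nlinarith
    have hcb : c * b ^ 3 ≤ c * a ^ 3 := by nlinarith
    simp only [hp]
    nlinarith
  -- value at t0
  set t0 : ℝ := 1 / Real.sqrt (1 + β) with ht0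
  have hst : Real.sqrt (1 + β) > 0 := Real.sqrt_pos.2 hβ1
  have ht0pos : 0 < t0 := by positivity
  have ht0sq : (1 + β) * t0 ^ 2 = 1 := by
    rw [ht0, div_pow, one_pow, Real.sq_sqrt hβ1.le]
    field_simp
  have hpt0 : p t0 ≤ 0 := by
    simp only [hp]
    have : c * t0 ≤ 0 := mul_nonpos_of_nonpos_of_nonneg hc0 ht0pos.le
    have h3 : c * t0 ^ 3 ≤ 0 := mul_nonpos_of_nonpos_of_nonneg hc0 (by positivity)
    nlinarith
  have hp0 : p 0 = 1 := by simp [hp]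
  have hcont : ContinuousOn p (Set.Icc 0 t0) := by
    apply Continuous.continuousOn; fun_prop
  have hiv : ∃ t ∈ Set.Icc 0 t0, p t = 0 := by
    have := intermediate_value_Icc' ht0pos.le hcont
    have h0 : (0:ℝ) ∈ Set.Icc (p t0) (p 0) := ⟨hpt0, by rw [hp0]; norm_num⟩
    obtain ⟨t, ht, hpt⟩ := this h0
    exact ⟨t, ht, hpt⟩
  obtain ⟨t, ⟨ht0', htt0⟩, hpt⟩ := hiv
  refine ⟨hanti, ⟨t, ⟨ht0', hpt⟩, ?_⟩, ?_⟩
  · rintro u ⟨hu0, hpu⟩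
    by_contra hne
    have hpu' : p u = 0 := hpu
    rcases lt_or_gt_of_ne hne with h | h
    · have := hanti (Set.mem_Ici.2 hu0) (Set.mem_Ici.2 ht0') h
      rw [hpu', hpt] at this; exact lt_irrefl 0 this
    · have := hanti (Set.mem_Ici.2 ht0') (Set.mem_Ici.2 hu0) h
      rw [hpu', hpt] at this; exact lt_irrefl 0 this
  · intro u hu0 hpu
    by_contra h
    push_neg at h
    have := hanti (Set.mem_Ici.2 ht0pos.le) (Set.mem_Ici.2 hu0) h
    have hpu' : p u = 0 := hpu
    rw [hpu'] at this
    linarith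
end

section
/- For p ≥ 1 and 0 ≤ k ≤ p−1, define a_p(k) := (p!/(2p)!)·((2p−k)!/((p−k)!·k!))·2^k and d_p(k) := a_p(k+1) − (k+2)·a_p(k+2) for k ≤ p−2, d_p(p−1) := a_p(p). Then d_p(k) = a_{p−1}(k)/(2p−1) for 0 ≤ k ≤ p−2; moreover a_p(0) = 1, a_p(1) = 1 (for p ≥ 1), and a_p(p) = 1/(2p−1)!! where (2p−1)!! = (2p)!/(2^p·p!). -/
open Nat

/-- Matérn polynomial coefficients `a_p(k)`. -/
noncomputable def maternCoeff (p k : ℕ) : ℚ :=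
  ((p ! : ℚ) / ((2 * p)! : ℚ)) * (((2 * p - k)! : ℚ) / (((p - k)! : ℚ) * (k ! : ℚ)))
    * 2 ^ k

/-- The derived coefficients `d_p(k)`. -/
noncomputable def maternDCoeff (p k : ℕ) : ℚ :=
  if k = p - 1 then maternCoeff p p
  else maternCoeff p (k + 1) - (k + 2) * maternCoeff p (k + 2)

/-- Identities for the Matérn coefficients: `d_p(k) = a_{p−1}(k)/(2p−1)` for
`0 ≤ k ≤ p−2`, and `a_p(0) = 1`, `a_p(1) = 1`, `a_p(p) = 1/(2p−1)!!` where
`(2p−1)!! = (2p)!/(2^p·p!)`. -/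
theorem matern_coefficient_identities (p : ℕ) (hp : 1 ≤ p) :
    (∀ k : ℕ, k + 2 ≤ p →
      maternDCoeff p k = maternCoeff (p - 1) k / (2 * (p : ℚ) - 1)) ∧
    maternCoeff p 0 = 1 ∧
    maternCoeff p 1 = 1 ∧
    maternCoeff p p = (2 ^ p * (p ! : ℚ)) / ((2 * p)! : ℚ) := by
  refine ⟨?_, ?_, ?_, ?_⟩
  · intro k hk
    obtain ⟨m, rfl⟩ : ∃ m, p = m + k + 2 := ⟨p - k - 2, by omega⟩
    rw [maternDCoeff, if_neg (by omega)]
    unfold maternCoeff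
    have e1 : 2 * (m + k + 2) - (k + 1) = 2*m + k + 3 := by omega
    have e2 : (m + k + 2) - (k + 1) = m + 1 := by omega
    have e3 : 2 * (m + k + 2) - (k + 2) = 2*m + k + 2 := by omega
    have e4 : (m + k + 2) - (k + 2) = m := by omega
    have e5 : (m + k + 2) - 1 = m + k + 1 := by omega
    have e6 : 2 * (m + k + 1) - k = 2*m + k + 2 := by omega
    have e7 : (m + k + 1) - k = m + 1 := by omega
    rw [e1, e2, e3, e4, e5, e6, e7]
    have f1 : ((m + k + 2)! : ℚ) = (m + k + 2) * (m + k + 1)! := by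
      push_cast [show m + k + 2 = (m + k + 1) + 1 from rfl, Nat.factorial_succ]; ring
    have f2 : ((2 * (m + k + 2))! : ℚ) = (2*m+2*k+4) * ((2*m+2*k+3) * (2 * (m + k + 1))!) := by
      have : 2 * (m + k + 2) = (2*(m+k+1) + 1) + 1 := by ring
      rw [this, Nat.factorial_succ, Nat.factorial_succ]; push_cast; ring_nf
    have f3 : ((2*m + k + 3)! : ℚ) = (2*m+k+3) * (2*m+k+2)! := by
      rw [show 2*m+k+3 = (2*m+k+2)+1 from rfl, Nat.factorial_succ]; push_cast; ring
    have f4 : ((m + 1)! : ℚ) = (m+1) * m ! := by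
      rw [Nat.factorial_succ]; push_cast; ring
    have f5 : ((k + 1)! : ℚ) = (k+1) * k ! := by
      rw [Nat.factorial_succ]; push_cast; ring
    have f6 : ((k + 2)! : ℚ) = (k+2) * ((k+1) * k !) := by
      rw [show k+2 = (k+1)+1 from rfl, Nat.factorial_succ, Nat.factorial_succ]; push_cast; ring
    rw [f1, f2, f3, f4, f5, f6]
    have hfac : ∀ n : ℕ, ((n ! : ℚ)) ≠ 0 := fun n => by positivity
    have h1 := hfac (2 * (m+k+1))
    have h2 := hfac (2*m+k+2)
    have h3 := hfac m
    have h4 := hfac k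
    have h5 := hfac (m+k+1)
    have h6 : 2 * ((m : ℚ) + k + 2) - 1 ≠ 0 := by
      have hm : (0:ℚ) ≤ m := Nat.cast_nonneg m
      have hk' : (0:ℚ) ≤ k := Nat.cast_nonneg k
      intro h; linarith
    push_cast
    field_simp
    ring
  · unfold maternCoeff
    simp [Nat.sub_zero]
    field_simp
  · unfold maternCoeff
    obtain ⟨q, rfl⟩ : ∃ q, p = q + 1 := ⟨p - 1, by omega⟩
    have e1 : 2 * (q+1) - 1 = 2*q + 1 := by omega
    have e2 : (q+1) - 1 = q := by omega
    rw [e1, e2]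
    have f1 : ((q + 1)! : ℚ) = (q+1) * q ! := by rw [Nat.factorial_succ]; push_cast; ring
    have f2 : ((2 * (q + 1))! : ℚ) = (2*q+2) * (2*q+1)! := by
      rw [show 2*(q+1) = (2*q+1)+1 by ring, Nat.factorial_succ]; push_cast; ring
    rw [f1, f2]
    have h1 : ((2*q+1)! : ℚ) ≠ 0 := by positivity
    have h2 : ((q)! : ℚ) ≠ 0 := by positivity
    field_simp
    ring
  · unfold maternCoeff
    rw [show 2*p - p = p by omega, Nat.sub_self]
    have h1 : ((2*p)! : ℚ) ≠ 0 := by positivity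
    have h2 : ((p)! : ℚ) ≠ 0 := by positivity
    field_simp
    ring
end
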